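/- If z : G → ℝ is a C² convex function on an open set G ⊆ ℝⁿ, then for every Borel set m ⊆ G, the Lebesgue measure of the gradient image ∇z(m) equals ∫_m det(D²z(x)) dx. -/

import Mathlib

open MeasureTheory Filter Topology

local notation "⟪" x ", " y "⟫" => @inner ℝ _ _ x y

lemma aux_eigen {n : ℕ} (T : EuclideanSpace ℝ (Fin n) →ₗ[ℝ] EuclideanSpace ℝ (Fin n))
    (hsym : T.IsSymmetric) (hpsd : ∀ v, 0 ≤ ⟪T v, v⟫) :
    0 ≤ LinearMap.det T ∧ ∀ v, v ≠ 0 → ⟪T v, v⟫ = 0 → LinearMap.det T = 0 := by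
  classical
  have hn : Module.finrank ℝ (EuclideanSpace ℝ (Fin n)) = n := finrank_euclideanSpace_fin
  set b := hsym.eigenvectorBasis hn with hb
  set μ := hsym.eigenvalues hn with hμdef
  have happ : ∀ i, T (b i) = μ i • b i := fun i => by
    exact_mod_cast hsym.apply_eigenvectorBasis hn i
  have hdet : LinearMap.det T = ∏ i, μ i := by
    have hm : LinearMap.toMatrix b.toBasis b.toBasis T = Matrix.diagonal μ := by
      ext i j
      rw [LinearMap.toMatrix_apply, OrthonormalBasis.coe_toBasis, happ, ← OrthonormalBasis.coe_toBasis,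
        LinearEquiv.map_smul]
      simp only [Module.Basis.repr_self, Finsupp.smul_single, smul_eq_mul, mul_one, Finsupp.single_apply, Matrix.diagonal_apply]
      rcases eq_or_ne j i with rfl | h
      · simp
      · simp [h, Ne.symm h]
    rw [← LinearMap.det_toMatrix b.toBasis, hm, Matrix.det_diagonal]
  have hμnn : ∀ i, 0 ≤ μ i := by
    intro i
    refine eigenvalue_nonneg_of_nonneg (hsym.hasEigenvalue_eigenvalues hn i) ?_
    intro x
    simpa [real_inner_comm, mul_comm] using hpsd x
  have hrepr : ∀ w : EuclideanSpace ℝ (Fin n), ⟪T w, w⟫ = ∑ i, μ i * ⟪b i, w⟫ ^ 2 := by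
    intro w
    have hw : T w = ∑ i, (μ i * ⟪b i, w⟫) • b i := by
      conv_lhs => rw [← b.sum_repr' w]
      rw [map_sum]
      refine Finset.sum_congr rfl fun i _ => ?_
      rw [LinearMap.map_smul, happ, smul_smul, mul_comm]
    rw [hw, sum_inner]
    refine Finset.sum_congr rfl fun i _ => ?_
    rw [real_inner_smul_left]; ring
  constructor
  · rw [hdet]; exact Finset.prod_nonneg fun i _ => hμnn i
  · intro v hv hzero
    obtain ⟨i, hi⟩ : ∃ i, ⟪b i, v⟫ ≠ 0 := by
      by_contra h
      push_neg at h
      apply hv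
      rw [← b.sum_repr' v]
      simp [h]
    rw [hdet]
    refine Finset.prod_eq_zero (Finset.mem_univ i) ?_
    have hterm : ∀ j ∈ Finset.univ, 0 ≤ μ j * ⟪b j, v⟫ ^ 2 := fun j _ =>
      mul_nonneg (hμnn j) (sq_nonneg _)
    have := (Finset.sum_eq_zero_iff_of_nonneg hterm).1 ((hrepr v).symm.trans hzero) i
      (Finset.mem_univ i)
    rcases mul_eq_zero.1 this with h | h
    · exact h
    · exact absurd (pow_eq_zero_iff two_ne_zero |>.1 h) hi

/-- For a `C²` convex function `z` on an open set `G ⊆ ℝⁿ`, the Lebesgue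
measure of the gradient image of a Borel set `m ⊆ G` equals the integral over
`m` of the Hessian determinant of `z` (the Jacobian determinant of `∇z`). -/
theorem mongeAmpere_measure_of_smooth {n : ℕ}
    (G : Set (EuclideanSpace ℝ (Fin n))) (hGo : IsOpen G)
    (z : EuclideanSpace ℝ (Fin n) → ℝ)
    (hz : ContDiffOn ℝ 2 z G) (hconv : ConvexOn ℝ G z)
    (m : Set (EuclideanSpace ℝ (Fin n))) (hm : MeasurableSet m) (hmG : m ⊆ G) :
    volume (gradient z '' m) =
      ∫⁻ x in m, ENNReal.ofReal ((fderiv ℝ (gradient z) x).det) := by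
  classical
  have hGconv : Convex ℝ G := hconv.1
  set g := gradient z with hgdef
  have hginner : ∀ y w, ⟪g y, w⟫ = fderiv ℝ z y w := fun y w =>
    InnerProductSpace.toDual_symm_apply
  have h2 : ContDiffOn ℝ (1+1) z G := by exact_mod_cast hz
  have hf1 : ContDiffOn ℝ 1 (fderiv ℝ z) G :=
    ((contDiffOn_succ_iff_fderiv_of_isOpen hGo).1 h2).2.2
  have hzdiffOn : DifferentiableOn ℝ z G := ((contDiffOn_succ_iff_fderiv_of_isOpen hGo).1 h2).1
  have hzdiff : ∀ x ∈ G, DifferentiableAt ℝ z x := fun x hx =>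
    hzdiffOn.differentiableAt (hGo.mem_nhds hx)
  set e := (InnerProductSpace.toDual ℝ (EuclideanSpace ℝ (Fin n))).symm.toContinuousLinearEquiv
  have hgeq : g = e ∘ fderiv ℝ z := rfl
  have hg1 : ContDiffOn ℝ 1 g G := by
    rw [hgeq]; exact e.contDiff.comp_contDiffOn hf1
  have hgdiff : ∀ x ∈ G, HasFDerivAt g (fderiv ℝ g x) x := fun x hx =>
    ((hg1.differentiableOn one_ne_zero).differentiableAt (hGo.mem_nhds hx)).hasFDerivAt
  -- derivative along lines
  have hline : ∀ (x v : EuclideanSpace ℝ (Fin n)), ∀ t : ℝ, x + t • v ∈ G →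
      HasDerivAt (fun s : ℝ => z (x + s • v)) ⟪g (x + t • v), v⟫ t := by
    intro x v t ht
    have h1 : HasDerivAt (fun s : ℝ => x + s • v) v t := by
      simpa using ((hasDerivAt_id t).smul_const v).const_add x
    have h2 := (hzdiff _ ht).hasFDerivAt.comp_hasDerivAt t h1
    rw [hginner]
    exact h2
  -- monotonicity of the gradient
  have hmono : ∀ x ∈ G, ∀ y ∈ G, ⟪g x, y - x⟫ ≤ ⟪g y, y - x⟫ := by
    intro x hx y hy
    set v := y - x with hv
    have hLfun : ⇑(AffineMap.lineMap x y : ℝ →ᵃ[ℝ] EuclideanSpace ℝ (Fin n)) =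
        fun t : ℝ => x + t • v := by
      funext t
      rw [AffineMap.lineMap_apply_module]
      module
    have hφ : ConvexOn ℝ ((fun t : ℝ => x + t • v) ⁻¹' G) (fun t => z (x + t • v)) := by
      have h := hconv.comp_affineMap (AffineMap.lineMap x y : ℝ →ᵃ[ℝ] EuclideanSpace ℝ (Fin n))
      rwa [hLfun] at h
    have h0 : (0 : ℝ) ∈ (fun t : ℝ => x + t • v) ⁻¹' G := by
      simp only [Set.mem_preimage, zero_smul, add_zero]; exact hx
    have h1 : (1 : ℝ) ∈ (fun t : ℝ => x + t • v) ⁻¹' G := by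
      simp only [Set.mem_preimage, one_smul, hv, add_sub_cancel]; exact hy
    have hd := hφ.monotoneOn_deriv
      (fun t ht => (hline x v t ht).differentiableAt) h0 h1 zero_le_one
    rw [(hline x v 0 h0).deriv, (hline x v 1 h1).deriv] at hd
    simpa [hv] using hd
  -- derivative of t ↦ ⟪g (x + t•v), v⟫ at any point where defined
  have hinnerderiv : ∀ x ∈ G, ∀ v : EuclideanSpace ℝ (Fin n),
      HasDerivAt (fun t : ℝ => ⟪g (x + t • v), v⟫) ⟪fderiv ℝ g x v, v⟫ 0 := by
    intro x hx v
    have h1 : HasDerivAt (fun s : ℝ => x + s • v) v 0 := by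
      simpa using ((hasDerivAt_id (0:ℝ)).smul_const v).const_add x
    have hg' : HasFDerivAt g (fderiv ℝ g x) ((fun s : ℝ => x + s • v) 0) := by
      simpa using hgdiff x hx
    have h2 := hg'.comp_hasDerivAt 0 h1
    have h3 := (((innerSL ℝ).flip v).hasFDerivAt.comp_hasDerivAt 0 h2)
    simpa only [Function.comp_def, ContinuousLinearMap.flip_apply, innerSL_apply_apply] using h3
  -- eventual membership
  have hevmem : ∀ x ∈ G, ∀ v : EuclideanSpace ℝ (Fin n),
      ∀ᶠ t in 𝓝 (0 : ℝ), x + t • v ∈ G := by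
    intro x hx v
    have hcont : Continuous fun t : ℝ => x + t • v :=
      continuous_const.add (continuous_id.smul continuous_const)
    have := hcont.continuousAt (x := (0:ℝ))
    have := this.preimage_mem_nhds (hGo.mem_nhds (by simpa using hx))
    exact this
  -- positive semidefiniteness
  have hpsd : ∀ x ∈ G, ∀ v : EuclideanSpace ℝ (Fin n), 0 ≤ ⟪fderiv ℝ g x v, v⟫ := by
    intro x hx v
    have htend : Filter.Tendsto (slope (fun t : ℝ => ⟪g (x + t • v), v⟫) 0) (𝓝[>] (0:ℝ))
        (𝓝 ⟪fderiv ℝ g x v, v⟫) :=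
      (hasDerivAt_iff_tendsto_slope.1 (hinnerderiv x hx v)).mono_left
        (nhdsWithin_mono _ fun t ht => ne_of_gt ht)
    refine ge_of_tendsto htend ?_
    filter_upwards [((hevmem x hx v).filter_mono nhdsWithin_le_nhds), self_mem_nhdsWithin]
      with t htG (ht : 0 < t)
    have hmle := hmono x hx (x + t • v) htG
    have hsub : (x + t • v) - x = t • v := by abel
    rw [hsub, real_inner_smul_right, real_inner_smul_right] at hmle
    have hnum : ⟪g x, v⟫ ≤ ⟪g (x + t • v), v⟫ := le_of_mul_le_mul_left hmle ht
    have : slope (fun t : ℝ => ⟪g (x + t • v), v⟫) 0 t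
        = (⟪g (x + t • v), v⟫ - ⟪g (x + (0:ℝ) • v), v⟫) / t := by
      rw [slope_def_field]; ring
    rw [this]
    apply div_nonneg _ ht.le
    simpa using sub_nonneg.2 hnum
  -- symmetry of the derivative of the gradient
  have hsymA : ∀ x ∈ G, ∀ v w : EuclideanSpace ℝ (Fin n),
      ⟪fderiv ℝ g x v, w⟫ = ⟪fderiv ℝ g x w, v⟫ := by
    intro x hx v w
    have hf'x : HasFDerivAt (fderiv ℝ z) (fderiv ℝ (fderiv ℝ z) x) x :=
      ((hf1.differentiableOn one_ne_zero).differentiableAt (hGo.mem_nhds hx)).hasFDerivAt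
    have hev : ∀ᶠ y in 𝓝 x, HasFDerivAt z (fderiv ℝ z y) y := by
      filter_upwards [hGo.mem_nhds hx] with y hy
      exact (hzdiff y hy).hasFDerivAt
    have hsymB := second_derivative_symmetric_of_eventually hev hf'x
    have hkey : ∀ u : EuclideanSpace ℝ (Fin n),
        ⟪fderiv ℝ g x u, w⟫ = fderiv ℝ (fderiv ℝ z) x u w ∧
        ⟪fderiv ℝ g x u, v⟫ = fderiv ℝ (fderiv ℝ z) x u v := by
      have haux : ∀ ww u : EuclideanSpace ℝ (Fin n),
          ⟪fderiv ℝ g x u, ww⟫ = fderiv ℝ (fderiv ℝ z) x u ww := by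
        intro ww u
        have h1 : HasFDerivAt (fun y => ⟪g y, ww⟫)
            (((innerSL ℝ).flip ww).comp (fderiv ℝ g x)) x :=
          ((innerSL ℝ).flip ww).hasFDerivAt.comp x (hgdiff x hx)
        have h2 : HasFDerivAt (fun y => fderiv ℝ z y ww)
            ((ContinuousLinearMap.apply ℝ ℝ ww).comp (fderiv ℝ (fderiv ℝ z) x)) x :=
          (ContinuousLinearMap.apply ℝ ℝ ww).hasFDerivAt.comp x hf'x
        have hfun : (fun y => ⟪g y, ww⟫) = fun y => fderiv ℝ z y ww :=
          funext fun y => hginner y ww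
        rw [hfun] at h1
        have := h1.unique h2
        have := congrFun (congrArg (fun (c : EuclideanSpace ℝ (Fin n) →L[ℝ] ℝ) => ⇑c) this) u
        simpa only [ContinuousLinearMap.coe_comp', Function.comp_apply,
          ContinuousLinearMap.flip_apply, innerSL_apply_apply, ContinuousLinearMap.apply_apply]
          using this
      exact fun u => ⟨haux w u, haux v u⟩
    rw [(hkey v).1, (hkey w).2, hsymB v w]
  -- determinant facts
  have hsymT : ∀ x ∈ G, LinearMap.IsSymmetric
      ((fderiv ℝ g x : EuclideanSpace ℝ (Fin n) →ₗ[ℝ] EuclideanSpace ℝ (Fin n))) := by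
    intro x hx v w
    have := hsymA x hx v w
    simpa [real_inner_comm (fderiv ℝ g x w) v] using this
  have hdetnn : ∀ x ∈ G, 0 ≤ (fderiv ℝ g x).det := by
    intro x hx
    exact (aux_eigen _ (hsymT x hx) (fun v => hpsd x hx v)).1
  have hdeg : ∀ x ∈ G, ∀ y ∈ G, x ≠ y → g x = g y → (fderiv ℝ g x).det = 0 := by
    intro x hx y hy hxy hgxy
    set v := y - x with hv
    have hvne : v ≠ 0 := sub_ne_zero_of_ne (Ne.symm hxy)
    have hvv : ⟪fderiv ℝ g x v, v⟫ = 0 := by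
      have htend : Filter.Tendsto (slope (fun t : ℝ => ⟪g (x + t • v), v⟫) 0) (𝓝[>] (0:ℝ))
          (𝓝 ⟪fderiv ℝ g x v, v⟫) :=
        (hasDerivAt_iff_tendsto_slope.1 (hinnerderiv x hx v)).mono_left
          (nhdsWithin_mono _ fun t ht => ne_of_gt ht)
      have hzero : Filter.Tendsto (slope (fun t : ℝ => ⟪g (x + t • v), v⟫) 0) (𝓝[>] (0:ℝ))
          (𝓝 0) := by
        apply Filter.Tendsto.congr' _ tendsto_const_nhds
        filter_upwards [Ioo_mem_nhdsGT_of_mem (Set.mem_Ico.2 ⟨le_refl (0:ℝ), zero_lt_one⟩)]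
          with t ht
        have htG : x + t • v ∈ G := hGconv.add_smul_sub_mem hx hy ⟨ht.1.le, ht.2.le⟩
        have h0t : ⟪g x, v⟫ ≤ ⟪g (x + t • v), v⟫ := by
          have hmle := hmono x hx (x + t • v) htG
          have hsub : (x + t • v) - x = t • v := by abel
          rw [hsub, real_inner_smul_right, real_inner_smul_right] at hmle
          exact le_of_mul_le_mul_left hmle ht.1
        have ht1 : ⟪g (x + t • v), v⟫ ≤ ⟪g x, v⟫ := by
          have hmle := hmono (x + t • v) htG y hy
          have hsub : y - (x + t • v) = (1 - t) • v := by rw [hv]; module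
          rw [hsub, real_inner_smul_right, real_inner_smul_right] at hmle
          have := le_of_mul_le_mul_left hmle (by linarith [ht.2] : (0:ℝ) < 1 - t)
          rwa [← hgxy] at this
        have heq : ⟪g (x + t • v), v⟫ = ⟪g x, v⟫ := le_antisymm ht1 h0t
        have hslope : slope (fun t : ℝ => ⟪g (x + t • v), v⟫) 0 t
            = (⟪g (x + t • v), v⟫ - ⟪g (x + (0:ℝ) • v), v⟫) / t := by
          rw [slope_def_field]; ring
        rw [hslope]
        simp only [zero_smul, add_zero]
        rw [heq, sub_self, zero_div]
      exact tendsto_nhds_unique htend hzero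
    exact (aux_eigen _ (hsymT x hx) (fun w => hpsd x hx w)).2 v hvne hvv
  -- measure-theoretic conclusion
  set D := fun x => (fderiv ℝ g x).det with hD
  have hDmeas : Measurable D :=
    ContinuousLinearMap.continuous_det.measurable.comp (measurable_fderiv ℝ g)
  set m₀ := m ∩ D ⁻¹' {0} with hm₀def
  set m₁ := m \ D ⁻¹' {0} with hm₁def
  have hm₀ : MeasurableSet m₀ := hm.inter (hDmeas (measurableSet_singleton 0))
  have hm₁ : MeasurableSet m₁ := hm.diff (hDmeas (measurableSet_singleton 0))
  have hinj : Set.InjOn g m₁ := by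
    intro x hx y hy hgxy
    by_contra hxy
    exact hx.2 (by simpa [hD] using hdeg x (hmG hx.1) y (hmG hy.1) hxy hgxy)
  have heq1 : (∫⁻ x in m₁, ENNReal.ofReal |D x|) = volume (g '' m₁) :=
    lintegral_abs_det_fderiv_eq_addHaar_image volume hm₁
      (fun x hx => (hgdiff x (hmG hx.1)).hasFDerivWithinAt) hinj
  have hle0 : volume (g '' m₀) ≤ ∫⁻ x in m₀, ENNReal.ofReal |D x| :=
    addHaar_image_le_lintegral_abs_det_fderiv volume hm₀
      (fun x hx => (hgdiff x (hmG hx.1)).hasFDerivWithinAt)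
  have hD0 : ∀ x ∈ m₀, D x = 0 := fun x hx => hx.2
  have hint0 : (∫⁻ x in m₀, ENNReal.ofReal |D x|) = 0 := by
    have h : (∫⁻ x in m₀, ENNReal.ofReal |D x|) = ∫⁻ _x in m₀, (0 : ENNReal) :=
      setLIntegral_congr_fun hm₀ (fun x hx => by
        rw [hD0 x hx, abs_zero, ENNReal.ofReal_zero])
    rw [h, lintegral_zero]
  have hint0' : (∫⁻ x in m₀, ENNReal.ofReal (D x)) = 0 := by
    have h : (∫⁻ x in m₀, ENNReal.ofReal (D x)) = ∫⁻ _x in m₀, (0 : ENNReal) :=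
      setLIntegral_congr_fun hm₀ (fun x hx => by
        rw [hD0 x hx, ENNReal.ofReal_zero])
    rw [h, lintegral_zero]
  have himg : g '' m = g '' m₁ ∪ g '' m₀ := by
    rw [← Set.image_union, Set.diff_union_inter]
  have hvol1 : volume (g '' m) = volume (g '' m₁) := by
    refine le_antisymm ?_ (measure_mono (Set.image_mono Set.diff_subset))
    rw [himg]
    refine (measure_union_le _ _).trans ?_
    rw [show volume (g '' m₀) = 0 from le_antisymm (hle0.trans hint0.le) (by simp), add_zero]
  have habs : ∀ x ∈ m₁, ENNReal.ofReal |D x| = ENNReal.ofReal (D x) := fun x hx => by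
    rw [abs_of_nonneg (hdetnn x (hmG hx.1))]
  calc volume (g '' m) = volume (g '' m₁) := hvol1
    _ = ∫⁻ x in m₁, ENNReal.ofReal |D x| := heq1.symm
    _ = ∫⁻ x in m₁, ENNReal.ofReal (D x) :=
        setLIntegral_congr_fun hm₁ habs
    _ = ∫⁻ x in m, ENNReal.ofReal (D x) := by
        conv_rhs => rw [← Set.diff_union_inter m (D ⁻¹' {0})]
        rw [lintegral_union (hm.inter (hDmeas (measurableSet_singleton 0)))
          Set.disjoint_sdiff_inter, hint0', add_zero]
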